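/- For the grammar G constructed from a CNF formula φ by the SAT reduction, w ∈ L(G) if and only if φ is satisfiable, where w = c_m ⋯ c_1 c_0 v_1 ⋯ v_n v_{n+1} d_n ⋯ d_1. -/

import Mathlib

/-- Categories of VW-CCG over atomic categories coded by natural numbers.
`slash d X Y` is `X /ᵈ Y` where `d = true` is a forward slash `/` and
`d = false` is a backward slash `\`. -/
inductive Cat : Type where
  | atom : ℕ → Cat
  | slash : Bool → Cat → Cat → Cat
deriving DecidableEq

namespace Cat

/-- The target (innermost atomic category). -/
def target : Cat → ℕ
  | atom a => a
  | slash _ X _ => X.target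

/-- The argument stack of a category, bottom of the stack first. -/
def args : Cat → List (Bool × Cat)
  | atom _ => []
  | slash d X Y => X.args ++ [(d, Y)]

/-- The number of arguments of a category. -/
def numArgs (X : Cat) : ℕ := X.args.length

/-- The size (number of symbols) of a category. -/
def size : Cat → ℕ
  | atom _ => 1
  | slash _ X Y => X.size + Y.size + 1

/-- `ArgOccurs p X` holds if the slash–category pair `p` occurs as an
argument somewhere inside the category `X`. -/
def ArgOccurs (p : Bool × Cat) : Cat → Prop
  | atom _ => False
  | slash d X Y => (d, Y) = p ∨ ArgOccurs p X ∨ ArgOccurs p Y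

end Cat

/-- Build `A /₁ X₁ ⋯ /ₘ Xₘ` from a target and an argument list. -/
def Cat.mk' (t : ℕ) (as : List (Bool × Cat)) : Cat :=
  as.foldl (fun c p => Cat.slash p.1 c p.2) (Cat.atom t)

/-- Push additional arguments on the stack of a category. -/
def appendArgs (X : Cat) (zs : List (Bool × Cat)) : Cat :=
  zs.foldl (fun c p => Cat.slash p.1 c p.2) X

/-- A VW-CCG combinatory rule: a (forward or backward) combinatory schema of
degree `zRestr.length`, optionally restricting the target of the variable `X`,
the category `Y`, and the slashes and categories of the arguments
`/₁ Z₁ ⋯ /_d Z_d` of the secondary input. -/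
structure Rule where
  fwd : Bool
  tRestr : Option ℕ
  yRestr : Option Cat
  zRestr : List (Bool × Option Cat)

/-- The degree of a rule. -/
def Rule.degree (r : Rule) : ℕ := r.zRestr.length

/-- `r.Inst L R O` holds if `L R ⇛ O` is a ground instance of the rule `r`:
forward: `X/Y  Y/₁Z₁⋯/_dZ_d ⇛ X/₁Z₁⋯/_dZ_d`;
backward: `Y/₁Z₁⋯/_dZ_d  X\Y ⇛ X/₁Z₁⋯/_dZ_d`, respecting the restrictions. -/
def Rule.Inst (r : Rule) (L R O : Cat) : Prop :=
  ∃ (X Y : Cat) (zs : List (Bool × Cat)),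
    (∀ t, r.tRestr = some t → X.target = t) ∧
    (∀ Y', r.yRestr = some Y' → Y = Y') ∧
    List.Forall₂ (fun (p : Bool × Option Cat) (z : Bool × Cat) =>
      z.1 = p.1 ∧ ∀ Z, p.2 = some Z → z.2 = Z) r.zRestr zs ∧
    O = appendArgs X zs ∧
    (if r.fwd then L = Cat.slash true X Y ∧ R = appendArgs Y zs
     else R = Cat.slash false X Y ∧ L = appendArgs Y zs)

/-- A VW-CCG grammar: a finite lexicon assigning categories to vocabulary
symbols (coded by naturals) or to the empty string (`none`), a finite set of
combinatory rules, and a distinguished atomic category. -/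
structure Grammar where
  lex : List (Option ℕ × Cat)
  rules : List Rule
  start : ℕ

/-- A grammar is ε-free if no lexicon entry is for the empty string. -/
def Grammar.EpsFree (G : Grammar) : Prop := ∀ e ∈ G.lex, e.1 ≠ none

/-- Derivation trees: leaves carry lexicon entries (`none` = empty string),
internal nodes carry categories and have exactly two children. -/
inductive DTree where
  | leaf : Option ℕ → Cat → DTree
  | node : Cat → DTree → DTree → DTree

namespace DTree

/-- The category at the root. -/
def top : DTree → Cat
  | leaf _ X => X
  | node X _ _ => X

/-- The yield: left-to-right concatenation of the symbols at the leaves. -/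
def yield : DTree → List ℕ
  | leaf none _ => []
  | leaf (some σ) _ => [σ]
  | node _ l r => l.yield ++ r.yield

/-- The total number of nodes. -/
def nodes : DTree → ℕ
  | leaf _ _ => 1
  | node _ l r => l.nodes + r.nodes + 1

/-- `τ.Valid G`: `τ` is a derivation tree of the grammar `G`. -/
def Valid (G : Grammar) : DTree → Prop
  | leaf σ X => (σ, X) ∈ G.lex
  | node X l r => Valid G l ∧ Valid G r ∧ ∃ rl ∈ G.rules, rl.Inst l.top r.top X

/-- `τ.CatAt C`: the category `C` labels some node of `τ`. -/
def CatAt : DTree → Cat → Prop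
  | leaf _ X, C => C = X
  | node X l r, C => C = X ∨ l.CatAt C ∨ r.CatAt C

end DTree

/-- The language generated by a grammar. -/
def Grammar.Lang (G : Grammar) : Set (List ℕ) :=
  { w | ∃ τ : DTree, τ.Valid G ∧ τ.top = Cat.atom G.start ∧ τ.yield = w }

/-- CNF formulas: clauses are lists of literals (sign, variable index). -/
abbrev CNF := List (List (Bool × ℕ))

/-- Satisfiability of a CNF formula. -/
def CNF.Satisfiable (φ : CNF) : Prop :=
  ∃ σ : ℕ → Bool, ∀ c ∈ φ, ∃ l ∈ c, σ l.2 = l.1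

/-! Atomic categories of the SAT-reduction grammar (`m` = number of
clauses): `aCent` is `[¢]`, `aC i` is `[c_i]`, `aV m j b` is `[v_j = b]`. -/

def aCent : ℕ := 0
def aC (i : ℕ) : ℕ := 1 + i
def aV (m j : ℕ) (b : Bool) : ℕ := m + 2 + 2 * j + cond b 1 0

/-! Vocabulary symbols: `sC i` is `c_i`, `sV m j` is `v_j`, `sD m n j` is
`d_j`. -/

def sC (i : ℕ) : ℕ := i
def sV (m j : ℕ) : ℕ := m + j
def sD (m n j : ℕ) : ℕ := m + n + 1 + j

/-- The secondary-input restriction `𝟙_j` / `𝟘_j`: `n` forward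
slash–variable pairs with the `j`-th (1-based) position fixed to
`[v_j = b]`. -/
def oneHot (n m j : ℕ) (b : Bool) : List (Bool × Option Cat) :=
  (List.range n).map fun k =>
    (true, if k = j - 1 then some (Cat.atom (aV m j b)) else none)

/-- The ε-free VW-CCG grammar constructed from a CNF formula `φ` with `n`
variables in the NP-hardness reduction. -/
def satGrammar (n : ℕ) (φ : CNF) : Grammar :=
  let m := φ.length
  { lex :=
      -- c_0 := [c_0]/[¢]
      (some (sC 0), Cat.slash true (Cat.atom (aC 0)) (Cat.atom aCent)) ::
      -- c_i := [c_i]/[c_{i−1}] for 1 ≤ i ≤ m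
      (((List.range m).map fun i =>
          (some (sC (i + 1)), Cat.slash true (Cat.atom (aC (i + 1))) (Cat.atom (aC i)))) ++
       -- v_j := [¢]/[v_j=b]/[¢] for 1 ≤ j ≤ n, b ∈ {0,1}
       ((List.range n).flatMap fun j =>
          [true, false].map fun b =>
            (some (sV m (j + 1)),
              Cat.mk' aCent [(true, Cat.atom (aV m (j + 1) b)), (true, Cat.atom aCent)])) ++
       -- v_{n+1} := [¢]
       [(some (sV m (n + 1)), Cat.atom aCent)] ++
       -- d_j := [v_j=b]
       ((List.range n).flatMap fun j =>
          [true, false].map fun b => (some (sD m n (j + 1)), Cat.atom (aV m (j + 1) b))))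
    rules :=
      -- guessing: X/[¢]  [¢]/[v_j=b]/[¢] ⇒ X/[v_j=b]/[¢]
      ((List.range n).flatMap fun j =>
        [true, false].map fun b =>
          ⟨true, none, some (Cat.atom aCent),
            [(true, some (Cat.atom (aV m (j + 1) b))), (true, some (Cat.atom aCent))]⟩) ++
      -- X/[¢]  [¢] ⇒ X
      [⟨true, none, some (Cat.atom aCent), []⟩] ++
      -- clause checking: X/[c_{i−1}]  [c_{i−1}] 𝟙_j ⇒ X 𝟙_j (v_j in c_i), etc.
      ((List.range m).flatMap fun i =>
        (φ.getD i []).map fun l =>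
          ⟨true, none, some (Cat.atom (aC i)), oneHot n m l.2 l.1⟩) ++
      -- X/[v_j=b]  [v_j=b] ⇒ X
      ((List.range n).flatMap fun j =>
        [true, false].map fun b => ⟨true, none, some (Cat.atom (aV m (j + 1) b)), []⟩)
    start := aC m }

/-- The input string `w = c_m ⋯ c_1 c_0 v_1 ⋯ v_n v_{n+1} d_n ⋯ d_1` of the
reduction. -/
def wSAT (m n : ℕ) : List ℕ :=
  ((List.range (m + 1)).reverse.map sC) ++
  ((List.range (n + 1)).map fun j => sV m (j + 1)) ++
  ((List.range n).reverse.map fun j => sD m n (j + 1))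

namespace SatRed

theorem appendArgs_nil (X : Cat) : appendArgs X [] = X := rfl

theorem appendArgs_append (X : Cat) (zs ws : List (Bool × Cat)) :
    appendArgs X (zs ++ ws) = appendArgs (appendArgs X zs) ws := by
  simp [appendArgs, List.foldl_append]

theorem appendArgs_args (zs : List (Bool × Cat)) (X : Cat) :
    (appendArgs X zs).args = X.args ++ zs := by
  induction zs generalizing X with
  | nil => simp [appendArgs]
  | cons p zs ih =>
    show (appendArgs (Cat.slash p.1 X p.2) zs).args = _
    rw [ih]; simp [Cat.args]

theorem appendArgs_singleton (X : Cat) (p : Bool × Cat) :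
    appendArgs X (zs ++ [p]) = Cat.slash p.1 (appendArgs X zs) p.2 := by
  rw [appendArgs_append]; rfl

/-- `HasLeaf τ s C`: the tree `τ` has a leaf carrying the entry `(s, C)`. -/
def HasLeaf : DTree → Option ℕ → Cat → Prop
  | DTree.leaf s' C', s, C => s' = s ∧ C' = C
  | DTree.node _ l r, s, C => HasLeaf l s C ∨ HasLeaf r s C

theorem arg_from_leaf {G : Grammar} : ∀ {τ : DTree}, τ.Valid G →
    ∀ p ∈ τ.top.args, ∃ s C, (s, C) ∈ G.lex ∧ HasLeaf τ s C ∧ p ∈ C.args := by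
  intro τ
  induction τ with
  | leaf s C => intro h p hp; exact ⟨s, C, h, ⟨rfl, rfl⟩, hp⟩
  | node X l r ihl ihr =>
    rintro ⟨hl, hr, rl, _, X', Y, zs, _, _, _, hO, hif⟩ p hp
    have key : p ∈ l.top.args ∨ p ∈ r.top.args := by
      rw [DTree.top] at hp; subst hO
      rw [appendArgs_args] at hp
      rcases List.mem_append.1 hp with h | h
      · cases hfwd : rl.fwd <;> rw [hfwd] at hif <;>
          obtain ⟨h1, h2⟩ := hif
        · right; rw [h1, Cat.args]; exact List.mem_append_left _ h
        · left; rw [h1, Cat.args]; exact List.mem_append_left _ h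
      · cases hfwd : rl.fwd <;> rw [hfwd] at hif <;>
          obtain ⟨h1, h2⟩ := hif
        · left; rw [h2, appendArgs_args]; exact List.mem_append_right _ h
        · right; rw [h2, appendArgs_args]; exact List.mem_append_right _ h
    rcases key with h | h
    · obtain ⟨s, C, h1, h2, h3⟩ := ihl hl p h
      exact ⟨s, C, h1, Or.inl h2, h3⟩
    · obtain ⟨s, C, h1, h2, h3⟩ := ihr hr p h
      exact ⟨s, C, h1, Or.inr h2, h3⟩

theorem count_yield_hasLeaf {s : ℕ} {C : Cat} :
    ∀ {τ : DTree}, HasLeaf τ (some s) C → 1 ≤ τ.yield.count s := by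
  intro τ
  induction τ with
  | leaf s' C' => rintro ⟨rfl, rfl⟩; simp [DTree.yield]
  | node X l r ihl ihr =>
    rintro (h | h) <;> simp only [DTree.yield, List.count_append]
    · have := ihl h; omega
    · have := ihr h; omega

theorem two_leaves_count {s : ℕ} {C₁ C₂ : Cat} (hne : C₁ ≠ C₂) :
    ∀ {τ : DTree}, HasLeaf τ (some s) C₁ → HasLeaf τ (some s) C₂ →
      2 ≤ τ.yield.count s := by
  intro τ
  induction τ with
  | leaf s' C' => rintro ⟨rfl, rfl⟩ ⟨-, rfl⟩; exact absurd rfl hne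
  | node X l r ihl ihr =>
    rintro (h1 | h1) (h2 | h2) <;> simp only [DTree.yield, List.count_append]
    · have := ihl h1 h2; omega
    · have := count_yield_hasLeaf h1; have := count_yield_hasLeaf h2; omega
    · have := count_yield_hasLeaf h1; have := count_yield_hasLeaf h2; omega
    · have := ihr h1 h2; omega

theorem mem_yield_leaf {G : Grammar} {s : ℕ} :
    ∀ {τ : DTree}, τ.Valid G → s ∈ τ.yield →
      ∃ C, (some s, C) ∈ G.lex ∧ HasLeaf τ (some s) C := by
  intro τ
  induction τ with
  | leaf s' C' =>
    intro hv hs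
    cases s' with
    | none => simp [DTree.yield] at hs
    | some a =>
      simp only [DTree.yield, List.mem_singleton] at hs
      subst hs; exact ⟨C', hv, rfl, rfl⟩
  | node X l r ihl ihr =>
    rintro ⟨hl, hr, -⟩ hs
    rcases List.mem_append.1 hs with h | h
    · obtain ⟨C, h1, h2⟩ := ihl hl h; exact ⟨C, h1, Or.inl h2⟩
    · obtain ⟨C, h1, h2⟩ := ihr hr h; exact ⟨C, h1, Or.inr h2⟩

theorem leaf_parent {G : Grammar} {s : Option ℕ} {C : Cat} :
    ∀ {τ : DTree}, τ.Valid G → HasLeaf τ s C →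
      τ = DTree.leaf s C ∨
      ∃ X l r, (DTree.node X l r).Valid G ∧
        (∀ s' C', HasLeaf (DTree.node X l r) s' C' → HasLeaf τ s' C') ∧
        (l = DTree.leaf s C ∨ r = DTree.leaf s C) := by
  intro τ
  induction τ with
  | leaf s' C' => rintro hv ⟨rfl, rfl⟩; exact Or.inl rfl
  | node X l r ihl ihr =>
    rintro hv (h | h)
    · rcases ihl hv.1 h with rfl | ⟨X', l', r', h1, h2, h3⟩
      · exact Or.inr ⟨X, _, r, hv, fun _ _ h => h, Or.inl rfl⟩
      · exact Or.inr ⟨X', l', r', h1, fun s' C' h => Or.inl (h2 s' C' h), h3⟩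
    · rcases ihr hv.2.1 h with rfl | ⟨X', l', r', h1, h2, h3⟩
      · exact Or.inr ⟨X, l, _, hv, fun _ _ h => h, Or.inr rfl⟩
      · exact Or.inr ⟨X', l', r', h1, fun s' C' h => Or.inr (h2 s' C' h), h3⟩

end SatRed
namespace SatRed

/-- The lexicon category `[¢]/[v_j=b]/[¢]` of `v_j`. -/
def vcat (m j : ℕ) (b : Bool) : Cat :=
  Cat.slash true (Cat.slash true (Cat.atom aCent) (Cat.atom (aV m j b))) (Cat.atom aCent)

theorem mk'_vcat (m j : ℕ) (b : Bool) :
    Cat.mk' aCent [(true, Cat.atom (aV m j b)), (true, Cat.atom aCent)] = vcat m j b := rfl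

theorem lex_cases {n : ℕ} {φ : CNF} {s : Option ℕ} {C : Cat}
    (h : (s, C) ∈ (satGrammar n φ).lex) :
    (s = some (sC 0) ∧ C = Cat.slash true (Cat.atom (aC 0)) (Cat.atom aCent)) ∨
    (∃ i < φ.length, s = some (sC (i + 1)) ∧
      C = Cat.slash true (Cat.atom (aC (i + 1))) (Cat.atom (aC i))) ∨
    (∃ j < n, ∃ b : Bool, s = some (sV φ.length (j + 1)) ∧ C = vcat φ.length (j + 1) b) ∨
    (s = some (sV φ.length (n + 1)) ∧ C = Cat.atom aCent) ∨
    (∃ j < n, ∃ b : Bool, s = some (sD φ.length n (j + 1)) ∧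
      C = Cat.atom (aV φ.length (j + 1) b)) := by
  simp only [satGrammar, List.mem_cons, List.mem_append, List.mem_map, List.mem_flatMap,
    List.mem_range, Prod.mk.injEq, mk'_vcat] at h
  rcases h with ⟨h1, h2⟩ | ((⟨i, hi, h1, h2⟩ | ⟨j, hj, b, hb, h1, h2⟩) | ⟨h1, h2⟩ | hF) |
    ⟨j, hj, b, hb, h1, h2⟩
  · exact Or.inl ⟨h1, h2⟩
  · exact Or.inr (Or.inl ⟨i, hi, h1.symm, h2.symm⟩)
  · exact Or.inr (Or.inr (Or.inl ⟨j, hj, b, h1.symm, h2.symm⟩))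
  · exact Or.inr (Or.inr (Or.inr (Or.inl ⟨h1, h2⟩)))
  · exact absurd hF List.not_mem_nil
  · exact Or.inr (Or.inr (Or.inr (Or.inr ⟨j, hj, b, h1.symm, h2.symm⟩)))

theorem rules_cases {n : ℕ} {φ : CNF} {rl : Rule}
    (h : rl ∈ (satGrammar n φ).rules) :
    (∃ j < n, ∃ b : Bool, rl = ⟨true, none, some (Cat.atom aCent),
        [(true, some (Cat.atom (aV φ.length (j + 1) b))), (true, some (Cat.atom aCent))]⟩) ∨
    rl = ⟨true, none, some (Cat.atom aCent), []⟩ ∨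
    (∃ i < φ.length, ∃ l ∈ φ.getD i [],
      rl = ⟨true, none, some (Cat.atom (aC i)), oneHot n φ.length l.2 l.1⟩) ∨
    (∃ j < n, ∃ b : Bool, rl = ⟨true, none, some (Cat.atom (aV φ.length (j + 1) b)), []⟩) := by
  simp only [satGrammar, List.mem_append, List.mem_map, List.mem_flatMap, List.mem_range,
    List.mem_singleton] at h
  rcases h with ((⟨j, hj, b, hb, h⟩ | h) | ⟨i, hi, l, hl, h⟩) | ⟨j, hj, b, hb, h⟩
  · exact Or.inl ⟨j, hj, b, h.symm⟩
  · exact Or.inr (Or.inl h)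
  · exact Or.inr (Or.inr (Or.inl ⟨i, hi, l, hl, h.symm⟩))
  · exact Or.inr (Or.inr (Or.inr ⟨j, hj, b, h.symm⟩))

theorem aV_big (m j : ℕ) (b : Bool) : m + 2 ≤ aV m j b := by
  cases b <;> simp [aV] <;> omega

theorem aV_inj {m j j' : ℕ} {b b' : Bool} (h : aV m j b = aV m j' b') : j = j' ∧ b = b' := by
  cases b <;> cases b' <;> simp [aV] at h ⊢ <;> omega

/-- Count of `sV m j` in the word is at most 1. -/
theorem count_wSAT_le {m n j : ℕ} (h1 : 1 ≤ j) (h2 : j ≤ n) :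
    (wSAT m n).count (sV m j) ≤ 1 := by
  rw [wSAT, List.count_append, List.count_append]
  have hc1 : ((List.range (m + 1)).reverse.map sC).count (sV m j) = 0 := by
    rw [List.count_eq_zero]
    simp only [List.mem_map, List.mem_reverse, List.mem_range, sC, sV]
    rintro ⟨i, hi, h⟩; omega
  have hc3 : (((List.range n).reverse.map fun j => sD m n (j + 1))).count (sV m j) = 0 := by
    rw [List.count_eq_zero]
    simp only [List.mem_map, List.mem_reverse, List.mem_range, sD, sV]
    rintro ⟨i, hi, h⟩; omega
  have hc2 : (((List.range (n + 1)).map fun j => sV m (j + 1))).count (sV m j) ≤ 1 := by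
    have hnd : (((List.range (n + 1)).map fun j => sV m (j + 1))).Nodup := by
      refine List.Nodup.map ?_ List.nodup_range
      intro a b hab; simp only [sV] at hab; omega
    exact List.nodup_iff_count_le_one.1 hnd _
  omega

end SatRed
namespace SatRed

theorem oneHot_length (n m j : ℕ) (b : Bool) : (oneHot n m j b).length = n := by
  simp [oneHot]

theorem sound {n : ℕ} {φ : CNF}
    (hvars : ∀ c ∈ φ, ∀ l ∈ c, 1 ≤ l.2 ∧ l.2 ≤ n)
    (h : wSAT φ.length n ∈ (satGrammar n φ).Lang) : φ.Satisfiable := by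
  classical
  obtain ⟨τ, hv, htop, hyield⟩ := h
  refine ⟨fun j => if HasLeaf τ (some (sV φ.length j)) (vcat φ.length j true) then true else false, ?_⟩
  have hσ : ∀ j b, 1 ≤ j → j ≤ n → HasLeaf τ (some (sV φ.length j)) (vcat φ.length j b) →
      (if HasLeaf τ (some (sV φ.length j)) (vcat φ.length j true) then true else false) = b := by
    intro j b hj1 hj2 hb
    cases b
    · rw [if_neg]
      intro htrue
      have hne : vcat φ.length j true ≠ vcat φ.length j false := by
        intro hcon
        simp only [vcat, Cat.slash.injEq, Cat.atom.injEq, aV, cond_true, cond_false] at hcon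
        omega
      have h2 := two_leaves_count hne htrue hb
      rw [hyield] at h2
      have := count_wSAT_le (m := φ.length) hj1 hj2
      omega
    · rw [if_pos hb]
  intro c hc
  obtain ⟨i, hi, rfl⟩ := List.mem_iff_getElem.1 hc
  have hmem : sC (i + 1) ∈ wSAT φ.length n := by
    simp only [wSAT, List.mem_append, List.mem_map, List.mem_reverse, List.mem_range]
    exact Or.inl (Or.inl ⟨i + 1, by omega, rfl⟩)
  obtain ⟨C, hClex, hCleaf⟩ := mem_yield_leaf hv (hyield ▸ hmem)
  have hC : C = Cat.slash true (Cat.atom (aC (i + 1))) (Cat.atom (aC i)) := by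
    rcases lex_cases hClex with ⟨h1, h2⟩ | ⟨i', hi', h1, h2⟩ | ⟨j, hj, b, h1, h2⟩ |
      ⟨h1, h2⟩ | ⟨j, hj, b, h1, h2⟩
    · exfalso; simp only [Option.some.injEq, sC] at h1; omega
    · have : i' = i := by simp only [Option.some.injEq, sC] at h1; omega
      rw [h2, this]
    · exfalso; simp only [Option.some.injEq, sC, sV] at h1; omega
    · exfalso; simp only [Option.some.injEq, sC, sV] at h1; omega
    · exfalso; simp only [Option.some.injEq, sC, sD] at h1; omega
  subst hC
  rcases leaf_parent hv hCleaf with rfl | ⟨X, l, r, hnv, hsub, hlr⟩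
  · simp [DTree.top] at htop
  obtain ⟨hvl, hvr, rl, hrl, hinst⟩ := hnv
  obtain ⟨X', Y, zs, htR, hyR, hzs, hO, hif⟩ := hinst
  rcases hlr with rfl | rfl
  · -- the c_{i+1} leaf is the left child
    rcases rules_cases hrl with ⟨j, hj, b, rfl⟩ | rfl | ⟨i', hi', lit, hlit, rfl⟩ |
      ⟨j, hj, b, rfl⟩
    · -- guessing rule: impossible
      exfalso
      simp only [if_pos] at hif
      obtain ⟨hL, -⟩ := hif
      have hY := hyR _ rfl
      rw [DTree.top] at hL
      injection hL with _ h1 h2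
      rw [hY] at h2
      injection h2 with h3
      simp only [aC, aCent] at h3
      omega
    · exfalso
      simp only [if_pos] at hif
      obtain ⟨hL, -⟩ := hif
      have hY := hyR _ rfl
      rw [DTree.top] at hL
      injection hL with _ h1 h2
      rw [hY] at h2
      injection h2 with h3
      simp only [aC, aCent] at h3
      omega
    · -- clause rule: the interesting case
      simp only [if_pos] at hif
      obtain ⟨hL, hR⟩ := hif
      have hY := hyR _ rfl
      rw [DTree.top] at hL
      injection hL with _ h1 h2
      rw [hY] at h2
      injection h2 with h3
      simp only [aC] at h3
      have hii' : i' = i := by omega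
      subst hii'
      rw [List.getD_eq_getElem _ _ hi] at hlit
      obtain ⟨hl1, hl2⟩ := hvars _ (List.getElem_mem hi) lit hlit
      obtain ⟨hlen, hget⟩ := List.forall₂_iff_get.1 hzs
      rw [oneHot_length] at hlen
      have hkk : lit.2 - 1 < (oneHot n φ.length lit.2 lit.1).length := by rw [oneHot_length]; omega
      have hkz : lit.2 - 1 < zs.length := by omega
      have hrel := hget (lit.2 - 1) hkk hkz
      simp only [List.get_eq_getElem] at hrel
      have honeget : (oneHot n φ.length lit.2 lit.1)[lit.2 - 1]'hkk =
          (true, some (Cat.atom (aV φ.length lit.2 lit.1))) := by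
        simp [oneHot]
      rw [honeget] at hrel
      obtain ⟨hz1, hz2⟩ := hrel
      have hz2' := hz2 _ rfl
      have hzargs : zs[lit.2 - 1]'hkz ∈ r.top.args := by
        rw [hR, appendArgs_args, hY]
        simpa [Cat.args] using List.getElem_mem hkz
      obtain ⟨s', C', hlex', hleaf', harg'⟩ := arg_from_leaf hvr _ hzargs
      have hVbig := aV_big φ.length lit.2 lit.1
      rcases lex_cases hlex' with ⟨h1, h2⟩ | ⟨i'', hi'', h1, h2⟩ | ⟨j, hj, b, h1, h2⟩ |
        ⟨h1, h2⟩ | ⟨j, hj, b, h1, h2⟩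
      · exfalso; subst h2
        simp only [Cat.args, List.nil_append, List.mem_singleton] at harg'
        rw [harg'] at hz2'
        injection hz2' with h4
        simp only [aCent] at h4
        omega
      · exfalso; subst h2
        simp only [Cat.args, List.nil_append, List.mem_singleton] at harg'
        rw [harg'] at hz2'
        injection hz2' with h4
        simp only [aC] at h4
        omega
      · -- the leaf v_{lit.2}
        subst h2
        simp only [vcat, Cat.args, List.nil_append, List.singleton_append, List.mem_cons,
          List.mem_singleton, List.not_mem_nil, or_false] at harg'
        rcases harg' with harg' | harg'
        · rw [harg'] at hz2'
          injection hz2' with h4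
          obtain ⟨h5, h6⟩ := aV_inj h4
          rw [h1] at hleaf'
          rw [h5, h6] at hleaf'
          exact ⟨lit, hlit, hσ lit.2 lit.1 hl1 hl2 (hsub _ _ (Or.inr hleaf'))⟩
        · exfalso
          rw [harg'] at hz2'
          injection hz2' with h4
          simp only [aCent] at h4
          omega
      · exfalso; subst h2
        simp only [Cat.args] at harg'
        exact List.not_mem_nil harg'
      · exfalso; subst h2
        simp only [Cat.args] at harg'
        exact List.not_mem_nil harg'
    · -- var-popping rule: impossible
      exfalso
      simp only [if_pos] at hif
      obtain ⟨hL, -⟩ := hif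
      have hY := hyR _ rfl
      rw [DTree.top] at hL
      injection hL with _ h1 h2
      rw [hY] at h2
      injection h2 with h3
      have := aV_big φ.length (j + 1) b
      simp only [aC] at h3
      omega
  · -- the c_{i+1} leaf as right child: impossible
    exfalso
    rcases rules_cases hrl with ⟨j, hj, b, rfl⟩ | rfl | ⟨i', hi', lit, hlit, rfl⟩ |
      ⟨j, hj, b, rfl⟩
    all_goals simp only [if_pos] at hif
    all_goals obtain ⟨hL, hR⟩ := hif
    all_goals have hY := hyR _ rfl
    all_goals rw [DTree.top] at hR
    all_goals have hargs := congrArg Cat.args hR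
    all_goals rw [appendArgs_args, hY] at hargs
    all_goals simp only [Cat.args, List.nil_append, List.append_nil] at hargs
    -- hargs : [(true, atom (aC i))] = zs
    · have hL2 := hzs.length_eq
      have hL1 := congrArg List.length hargs
      simp only [List.length_cons, List.length_nil] at hL1 hL2
      omega
    · have hL2 := hzs.length_eq
      have hL1 := congrArg List.length hargs
      simp only [List.length_cons, List.length_nil] at hL1 hL2
      omega
    · -- clause rule on the right
      subst hargs
      have hlen := hzs.length_eq
      rw [oneHot_length] at hlen
      simp only [List.length_cons, List.length_nil] at hlen
      rw [List.getD_eq_getElem _ _ hi'] at hlit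
      obtain ⟨hl1, hl2⟩ := hvars _ (List.getElem_mem hi') lit hlit
      have hlit2 : lit.2 = 1 := by omega
      obtain ⟨-, hget⟩ := List.forall₂_iff_get.1 hzs
      have hkk : 0 < (oneHot n φ.length lit.2 lit.1).length := by rw [oneHot_length]; omega
      have hrel := hget 0 hkk (by simp)
      simp only [List.get_eq_getElem] at hrel
      have honeget : (oneHot n φ.length lit.2 lit.1)[0]'hkk =
          (true, some (Cat.atom (aV φ.length lit.2 lit.1))) := by
        simp [oneHot, hlit2]
      rw [honeget] at hrel
      have hz2' := hrel.2 _ rfl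
      simp only [List.getElem_cons_zero] at hz2'
      injection hz2' with h4
      have := aV_big φ.length lit.2 lit.1
      simp only [aC] at h4
      omega
    · have hL2 := hzs.length_eq
      have hL1 := congrArg List.length hargs
      simp only [List.length_cons, List.length_nil] at hL1 hL2
      omega

end SatRed
namespace SatRed

/-- The argument stack `[v_1=σ1] ⋯ [v_k=σk]` of guessed assignments. -/
def asgn (m : ℕ) (σ : ℕ → Bool) (k : ℕ) : List (Bool × Cat) :=
  (List.range k).map fun j => (true, Cat.atom (aV m (j + 1) (σ (j + 1))))

theorem asgn_succ (m : ℕ) (σ : ℕ → Bool) (k : ℕ) :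
    asgn m σ (k + 1) = asgn m σ k ++ [(true, Cat.atom (aV m (k + 1) (σ (k + 1))))] := by
  simp [asgn, List.range_succ]

/-- Part 1 of the derivation: guessing the assignment. -/
def guessT (m : ℕ) (σ : ℕ → Bool) : ℕ → DTree
  | 0 => DTree.leaf (some (sC 0)) (Cat.slash true (Cat.atom (aC 0)) (Cat.atom aCent))
  | k + 1 =>
    DTree.node (appendArgs (Cat.atom (aC 0)) (asgn m σ (k + 1) ++ [(true, Cat.atom aCent)]))
      (guessT m σ k)
      (DTree.leaf (some (sV m (k + 1))) (vcat m (k + 1) (σ (k + 1))))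

theorem guessT_top (m : ℕ) (σ : ℕ → Bool) (k : ℕ) :
    (guessT m σ k).top = appendArgs (Cat.atom (aC 0)) (asgn m σ k ++ [(true, Cat.atom aCent)]) := by
  cases k <;> simp [guessT, DTree.top, asgn, appendArgs]

theorem guessT_yield (m : ℕ) (σ : ℕ → Bool) (k : ℕ) :
    (guessT m σ k).yield = sC 0 :: (List.range k).map fun j => sV m (j + 1) := by
  induction k with
  | zero => simp [guessT, DTree.yield]
  | succ k ih => simp [guessT, DTree.yield, ih, List.range_succ]

/-- Parts 1–2 of the derivation: `closeT` closes the guessing with `v_{n+1}`,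
then the clause symbols are processed. -/
def closeT (m n : ℕ) (σ : ℕ → Bool) : DTree :=
  DTree.node (appendArgs (Cat.atom (aC 0)) (asgn m σ n)) (guessT m σ n)
    (DTree.leaf (some (sV m (n + 1))) (Cat.atom aCent))

def clauseT (m n : ℕ) (σ : ℕ → Bool) : ℕ → DTree
  | 0 => closeT m n σ
  | i + 1 =>
    DTree.node (appendArgs (Cat.atom (aC (i + 1))) (asgn m σ n))
      (DTree.leaf (some (sC (i + 1)))
        (Cat.slash true (Cat.atom (aC (i + 1))) (Cat.atom (aC i))))
      (clauseT m n σ i)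

theorem clauseT_top (m n : ℕ) (σ : ℕ → Bool) (i : ℕ) :
    (clauseT m n σ i).top = appendArgs (Cat.atom (aC i)) (asgn m σ n) := by
  cases i <;> rfl

theorem clauseT_yield (m n : ℕ) (σ : ℕ → Bool) (i : ℕ) :
    (clauseT m n σ i).yield =
      ((List.range i).reverse.map fun i' => sC (i' + 1)) ++
        (sC 0 :: (List.range (n + 1)).map fun j => sV m (j + 1)) := by
  induction i with
  | zero =>
    simp [clauseT, closeT, DTree.yield, guessT_yield, List.range_succ]
  | succ i ih =>
    simp only [clauseT, DTree.yield, ih, List.range_succ, List.reverse_append,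
      List.reverse_singleton, List.map_append, List.map_cons, List.map_nil]
    simp [DTree.yield]

/-- Part 3 of the derivation: popping the assignment arguments. -/
def popT (m n : ℕ) (σ : ℕ → Bool) : ℕ → DTree
  | 0 => clauseT m n σ m
  | t + 1 =>
    DTree.node (appendArgs (Cat.atom (aC m)) (asgn m σ (n - (t + 1))))
      (popT m n σ t)
      (DTree.leaf (some (sD m n (n - t))) (Cat.atom (aV m (n - t) (σ (n - t)))))

theorem popT_top (m n : ℕ) (σ : ℕ → Bool) (t : ℕ) :
    (popT m n σ t).top = appendArgs (Cat.atom (aC m)) (asgn m σ (n - t)) := by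
  cases t
  · simpa [popT] using clauseT_top m n σ m
  · rfl

theorem popT_yield (m n : ℕ) (σ : ℕ → Bool) (t : ℕ) :
    (popT m n σ t).yield =
      (clauseT m n σ m).yield ++ ((List.range t).map fun t' => sD m n (n - t')) := by
  induction t with
  | zero => simp [popT]
  | succ t ih => simp [popT, DTree.yield, ih, List.range_succ]

theorem popT_yield_full (m n : ℕ) (σ : ℕ → Bool) :
    (popT m n σ n).yield = wSAT m n := by
  rw [popT_yield, clauseT_yield, wSAT]
  have hA : (List.range (m + 1)).reverse.map sC =
      ((List.range m).reverse.map fun i' => sC (i' + 1)) ++ [sC 0] := by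
    apply List.ext_getElem
    · simp
    · intro i h1 h2
      simp only [List.length_map, List.length_reverse, List.length_range] at h1 h2
      by_cases hc : i < m
      · rw [List.getElem_map, List.getElem_reverse, List.getElem_range,
          List.getElem_append_left (by simpa using hc)]
        simp only [List.getElem_map, List.getElem_reverse, List.getElem_range,
          List.length_range, sC]
        omega
      · have hi : i = m := by omega
        subst hi
        rw [List.getElem_map, List.getElem_reverse, List.getElem_range,
          List.getElem_append_right (by simp)]
        simp [sC]
  have hD : ((List.range n).map fun t' => sD m n (n - t')) =
      ((List.range n).reverse.map fun j => sD m n (j + 1)) := by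
    apply List.ext_getElem
    · simp
    · intro i h1 h2
      simp only [List.length_map, List.length_range] at h1
      simp only [List.getElem_map, List.getElem_reverse, List.getElem_range,
        List.length_range]
      congr 1
      omega
  rw [hA, hD]
  simp [List.append_assoc]

end SatRed
namespace SatRed

theorem cc_mem_lex {n : ℕ} {φ : CNF} {i : ℕ} (hi : i < φ.length) :
    (some (sC (i + 1)), Cat.slash true (Cat.atom (aC (i + 1))) (Cat.atom (aC i))) ∈
      (satGrammar n φ).lex := by
  apply List.mem_cons_of_mem
  apply List.mem_append_left
  apply List.mem_append_left
  apply List.mem_append_left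
  exact List.mem_map.2 ⟨i, List.mem_range.2 hi, rfl⟩

theorem vj_mem_lex {n : ℕ} {φ : CNF} {j : ℕ} (hj : j < n) (b : Bool) :
    (some (sV φ.length (j + 1)), vcat φ.length (j + 1) b) ∈ (satGrammar n φ).lex := by
  apply List.mem_cons_of_mem
  apply List.mem_append_left
  apply List.mem_append_left
  apply List.mem_append_right
  apply List.mem_flatMap.2
  refine ⟨j, List.mem_range.2 hj, ?_⟩
  cases b
  · exact List.mem_cons_of_mem _ (List.mem_cons_self)
  · exact List.mem_cons_self

theorem vend_mem_lex {n : ℕ} {φ : CNF} :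
    (some (sV φ.length (n + 1)), Cat.atom aCent) ∈ (satGrammar n φ).lex := by
  apply List.mem_cons_of_mem
  apply List.mem_append_left
  apply List.mem_append_right
  exact List.mem_singleton.2 rfl

theorem dj_mem_lex {n : ℕ} {φ : CNF} {j : ℕ} (hj : j < n) (b : Bool) :
    (some (sD φ.length n (j + 1)), Cat.atom (aV φ.length (j + 1) b)) ∈ (satGrammar n φ).lex := by
  apply List.mem_cons_of_mem
  apply List.mem_append_right
  apply List.mem_flatMap.2
  refine ⟨j, List.mem_range.2 hj, ?_⟩
  cases b
  · exact List.mem_cons_of_mem _ (List.mem_cons_self)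
  · exact List.mem_cons_self

theorem guess_mem_rules {n : ℕ} {φ : CNF} {j : ℕ} (hj : j < n) (b : Bool) :
    (⟨true, none, some (Cat.atom aCent),
      [(true, some (Cat.atom (aV φ.length (j + 1) b))), (true, some (Cat.atom aCent))]⟩ : Rule) ∈
      (satGrammar n φ).rules := by
  apply List.mem_append_left
  apply List.mem_append_left
  apply List.mem_append_left
  apply List.mem_flatMap.2
  refine ⟨j, List.mem_range.2 hj, ?_⟩
  cases b
  · exact List.mem_cons_of_mem _ (List.mem_cons_self)
  · exact List.mem_cons_self

theorem degen_mem_rules {n : ℕ} {φ : CNF} :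
    (⟨true, none, some (Cat.atom aCent), []⟩ : Rule) ∈ (satGrammar n φ).rules := by
  apply List.mem_append_left
  apply List.mem_append_left
  apply List.mem_append_right
  exact List.mem_singleton.2 rfl

theorem clause_mem_rules {n : ℕ} {φ : CNF} {i : ℕ} (hi : i < φ.length)
    {l : Bool × ℕ} (hl : l ∈ φ.getD i []) :
    (⟨true, none, some (Cat.atom (aC i)), oneHot n φ.length l.2 l.1⟩ : Rule) ∈
      (satGrammar n φ).rules := by
  apply List.mem_append_left
  apply List.mem_append_right
  apply List.mem_flatMap.2
  exact ⟨i, List.mem_range.2 hi, List.mem_map.2 ⟨l, hl, rfl⟩⟩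

theorem pop_mem_rules {n : ℕ} {φ : CNF} {j : ℕ} (hj : j < n) (b : Bool) :
    (⟨true, none, some (Cat.atom (aV φ.length (j + 1) b)), []⟩ : Rule) ∈
      (satGrammar n φ).rules := by
  apply List.mem_append_right
  apply List.mem_flatMap.2
  refine ⟨j, List.mem_range.2 hj, ?_⟩
  cases b
  · exact List.mem_cons_of_mem _ (List.mem_cons_self)
  · exact List.mem_cons_self

theorem guessT_valid {n : ℕ} {φ : CNF} (σ : ℕ → Bool) :
    ∀ k, k ≤ n → (guessT φ.length σ k).Valid (satGrammar n φ) := by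
  intro k
  induction k with
  | zero => intro _; exact List.mem_cons_self
  | succ k ih =>
    intro hk
    refine ⟨ih (by omega), vj_mem_lex (by omega) _, ?_⟩
    refine ⟨_, guess_mem_rules (j := k) (by omega) (σ (k + 1)), ?_⟩
    refine ⟨appendArgs (Cat.atom (aC 0)) (asgn φ.length σ k), Cat.atom aCent,
      [(true, Cat.atom (aV φ.length (k + 1) (σ (k + 1)))), (true, Cat.atom aCent)],
      ?_, ?_, ?_, ?_, ?_⟩
    · intro t h; cases h
    · intro Y' h; exact Option.some.inj h
    · exact List.Forall₂.cons ⟨rfl, fun Z h => Option.some.inj h⟩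
        (List.Forall₂.cons ⟨rfl, fun Z h => Option.some.inj h⟩ List.Forall₂.nil)
    · show appendArgs (Cat.atom (aC 0)) (asgn φ.length σ (k + 1) ++ [(true, Cat.atom aCent)]) = _
      rw [← appendArgs_append, asgn_succ]
      simp [List.append_assoc]
    · simp only [if_pos]
      constructor
      · rw [guessT_top, appendArgs_singleton]
      · rfl

theorem closeT_valid {n : ℕ} {φ : CNF} (σ : ℕ → Bool) :
    (closeT φ.length n σ).Valid (satGrammar n φ) := by
  refine ⟨guessT_valid σ n le_rfl, vend_mem_lex, ?_⟩
  refine ⟨_, degen_mem_rules, ?_⟩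
  refine ⟨appendArgs (Cat.atom (aC 0)) (asgn φ.length σ n), Cat.atom aCent, [],
    ?_, ?_, List.Forall₂.nil, rfl, ?_⟩
  · intro t h; cases h
  · intro Y' h; exact Option.some.inj h
  · simp only [if_pos]
    constructor
    · rw [guessT_top, appendArgs_singleton]
    · rfl

theorem clauseT_valid {n : ℕ} {φ : CNF} (σ : ℕ → Bool)
    (hvars : ∀ c ∈ φ, ∀ l ∈ c, 1 ≤ l.2 ∧ l.2 ≤ n)
    (hsat : ∀ c ∈ φ, ∃ l ∈ c, σ l.2 = l.1) :
    ∀ i, i ≤ φ.length → (clauseT φ.length n σ i).Valid (satGrammar n φ) := by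
  intro i
  induction i with
  | zero => intro _; exact closeT_valid σ
  | succ i ih =>
    intro hi
    have hi' : i < φ.length := by omega
    have hmem : φ[i] ∈ φ := List.getElem_mem hi'
    obtain ⟨lit, hlit, hσlit⟩ := hsat _ hmem
    obtain ⟨hl1, hl2⟩ := hvars _ hmem lit hlit
    rw [← List.getD_eq_getElem φ [] hi'] at hlit
    refine ⟨cc_mem_lex hi', ih (by omega), ?_⟩
    refine ⟨_, clause_mem_rules hi' hlit, ?_⟩
    refine ⟨Cat.atom (aC (i + 1)), Cat.atom (aC i), asgn φ.length σ n,
      ?_, ?_, ?_, rfl, ?_⟩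
    · intro t h; cases h
    · intro Y' h; exact Option.some.inj h
    · refine List.forall₂_iff_get.2 ⟨by simp [oneHot_length, asgn], ?_⟩
      intro k h1 h2
      rw [oneHot_length] at h1
      simp only [List.get_eq_getElem, oneHot, asgn, List.getElem_map, List.getElem_range]
      refine ⟨by trivial, ?_⟩
      intro Z hZ
      by_cases hc : k = lit.2 - 1
      · rw [if_pos hc] at hZ
        have hk : k + 1 = lit.2 := by omega
        rw [hk, hσlit]
        exact Option.some.inj hZ
      · rw [if_neg hc] at hZ
        cases hZ
    · simp only [if_pos]
      exact ⟨rfl, clauseT_top _ _ _ _⟩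

theorem popT_valid {n : ℕ} {φ : CNF} (σ : ℕ → Bool)
    (hvars : ∀ c ∈ φ, ∀ l ∈ c, 1 ≤ l.2 ∧ l.2 ≤ n)
    (hsat : ∀ c ∈ φ, ∃ l ∈ c, σ l.2 = l.1) :
    ∀ t, t ≤ n → (popT φ.length n σ t).Valid (satGrammar n φ) := by
  intro t
  induction t with
  | zero => intro _; exact clauseT_valid σ hvars hsat _ le_rfl
  | succ t ih =>
    intro ht
    have hj : n - t - 1 < n := by omega
    have hnt : n - t = (n - t - 1) + 1 := by omega
    have hlex := dj_mem_lex (n := n) (φ := φ) hj (σ (n - t))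
    rw [← hnt] at hlex
    have hrule := pop_mem_rules (n := n) (φ := φ) hj (σ (n - t))
    rw [← hnt] at hrule
    refine ⟨ih (by omega), hlex, ?_⟩
    refine ⟨_, hrule, ?_⟩
    refine ⟨appendArgs (Cat.atom (aC φ.length)) (asgn φ.length σ (n - (t + 1))),
      Cat.atom (aV φ.length (n - t) (σ (n - t))), [],
      ?_, ?_, List.Forall₂.nil, rfl, ?_⟩
    · intro t' h; cases h
    · intro Y' h; exact Option.some.inj h
    · simp only [if_pos]
      constructor
      · rw [popT_top]
        have h1 : n - t = (n - (t + 1)) + 1 := by omega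
        rw [h1, asgn_succ, appendArgs_singleton]
      · rfl

theorem complete {n : ℕ} {φ : CNF}
    (hvars : ∀ c ∈ φ, ∀ l ∈ c, 1 ≤ l.2 ∧ l.2 ≤ n)
    (hsat : φ.Satisfiable) : wSAT φ.length n ∈ (satGrammar n φ).Lang := by
  obtain ⟨σ, hσ⟩ := hsat
  refine ⟨popT φ.length n σ n, popT_valid σ hvars hσ n le_rfl, ?_, popT_yield_full _ _ _⟩
  rw [popT_top]
  simp [asgn, satGrammar, appendArgs]

end SatRed

/-- Correctness of the SAT reduction: the constructed string is generated by
the constructed grammar if and only if the CNF formula is satisfiable. -/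
theorem satGrammar_correct (n : ℕ) (φ : CNF)
    (hvars : ∀ c ∈ φ, ∀ l ∈ c, 1 ≤ l.2 ∧ l.2 ≤ n) :
    wSAT φ.length n ∈ (satGrammar n φ).Lang ↔ φ.Satisfiable :=
  ⟨SatRed.sound hvars, SatRed.complete hvars⟩
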